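/- arXiv:2404.03964 — 2 statements merged into one kernel-verified Lean document; each statement's English description precedes it below -/
import Mathlib

section
/- Let k be real, ψ = √(1 + k²), and let L be the 3×3 complex matrix with rows (0, −1, ik), (1, 0, 0), (ik, 0, 0). Then for every real τ, the matrix exponential e^{τL} equals the 3×3 matrix with rows (cos(ψτ), −(1/ψ)sin(ψτ), (ik/ψ)sin(ψτ)), ((1/ψ)sin(ψτ), (k² + cos(ψτ))/ψ², (ik/ψ²)(1 − cos(ψτ))), ((ik/ψ)sin(ψτ), (ik/ψ²)(cos(ψτ) − 1), (1 + k² cos(ψτ))/ψ²). -/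
open Matrix Complex Nat

section Aux


attribute [local instance] Matrix.linftyOpNormedRing Matrix.linftyOpNormedAlgebra

private lemma pow_odd_of_cube {A : Matrix (Fin 3) (Fin 3) ℂ} {c : ℂ} (h3 : A ^ 3 = c • A)
    (n : ℕ) : A ^ (2 * n + 1) = c ^ n • A := by
  induction n with
  | zero => simp
  | succ n ih =>
    have h : 2 * (n + 1) + 1 = (2 * n + 1) + 2 := by ring
    rw [h, pow_add, ih, smul_mul_assoc, (pow_succ' A 2).symm, h3, smul_smul,
      ← pow_succ]

private lemma exp_cube (θ : ℝ) (hθ : θ ≠ 0) (A : Matrix (Fin 3) (Fin 3) ℂ)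
    (h3 : A ^ 3 = (-(θ : ℂ) ^ 2) • A) :
    NormedSpace.exp A =
      1 + (Complex.sin θ / θ) • A + ((1 - Complex.cos θ) / (θ : ℂ) ^ 2) • A ^ 2 := by
  have hθc : (θ : ℂ) ≠ 0 := Complex.ofReal_ne_zero.2 hθ
  have hpow := pow_odd_of_cube h3
  -- odd part
  have hodd1 : HasSum (fun n : ℕ => (((2 * n + 1)! : ℂ))⁻¹ * (-(θ : ℂ) ^ 2) ^ n)
      (Complex.sin θ / θ) := by
    have hsin := (Complex.hasSum_sin (θ : ℂ)).div_const (θ : ℂ)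
    convert hsin using 2 with n
    · rfl
    have hf : (((2 * n + 1)! : ℂ)) ≠ 0 := Nat.cast_ne_zero.2 (Nat.factorial_ne_zero _)
    rw [neg_pow, ← pow_mul]
    field_simp
    ring
  have hodd : HasSum (fun n : ℕ => (((2 * n + 1)! : ℂ))⁻¹ • A ^ (2 * n + 1))
      ((Complex.sin θ / θ) • A) := by
    have := hodd1.smul_const A
    convert this using 2 with n
    rw [hpow n, smul_smul]
  -- even part
  have hc1 : HasSum (fun n : ℕ => (-1 : ℂ) ^ (n + 1) * (θ : ℂ) ^ (2 * (n + 1)) / ((2 * (n + 1))! : ℂ))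
      (Complex.cos θ - 1) := by
    have := (hasSum_nat_add_iff' (f := fun n : ℕ => (-1 : ℂ) ^ n * (θ : ℂ) ^ (2 * n) / ((2 * n)! : ℂ))
      (g := Complex.cos θ) 1).2 (Complex.hasSum_cos (θ : ℂ))
    simpa using this
  have hc2 : HasSum (fun n : ℕ => (((2 * (n + 1))! : ℂ))⁻¹ * (-(θ : ℂ) ^ 2) ^ n)
      ((1 - Complex.cos θ) / (θ : ℂ) ^ 2) := by
    have h := (hc1.neg).div_const ((θ : ℂ) ^ 2)
    have h2 : (1 : ℂ) - Complex.cos θ = -(Complex.cos θ - 1) := by ring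
    rw [h2]
    convert h using 2 with n
    · rfl
    have hf : (((2 * (n + 1))! : ℂ)) ≠ 0 := Nat.cast_ne_zero.2 (Nat.factorial_ne_zero _)
    rw [neg_pow, ← pow_mul]
    field_simp
    ring
  have heven1 : HasSum (fun n : ℕ => (((2 * (n + 1))! : ℂ))⁻¹ • A ^ (2 * (n + 1)))
      (((1 - Complex.cos θ) / (θ : ℂ) ^ 2) • A ^ 2) := by
    have := hc2.smul_const (A ^ 2)
    convert this using 2 with n
    have : 2 * (n + 1) = (2 * n + 1) + 1 := by ring
    rw [this, pow_succ, hpow n, smul_mul_assoc, smul_smul, ← pow_two]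
  -- combine
  have heven : HasSum (fun n : ℕ => (((2 * n)! : ℂ))⁻¹ • A ^ (2 * n))
      (((1 - Complex.cos θ) / (θ : ℂ) ^ 2) • A ^ 2 + 1) := by
    have h := (hasSum_nat_add_iff (f := fun n : ℕ => (((2 * n)! : ℂ))⁻¹ • A ^ (2 * n)) 1).1
      (by simpa using heven1)
    simpa using h
  have total : HasSum (fun n : ℕ => ((n ! : ℂ))⁻¹ • A ^ n)
      ((((1 - Complex.cos θ) / (θ : ℂ) ^ 2) • A ^ 2 + 1) + (Complex.sin θ / θ) • A) :=
    HasSum.even_add_odd heven hodd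
  have := (NormedSpace.exp_series_hasSum_exp' A).unique total
  refine this.trans ?_; abel

end Aux


set_option maxHeartbeats 1000000 in
/-- The matrix exponential of the one-dimensional RSWE linear operator:
for `L = [[0, −1, ik], [1, 0, 0], [ik, 0, 0]]` and `ψ = √(1 + k²)`,
`e^{τL}` is the stated explicit matrix. -/
theorem rswe_matrix_exponential (k τ : ℝ) (ψ : ℝ) (hψ : ψ = Real.sqrt (1 + k ^ 2))
    (L : Matrix (Fin 3) (Fin 3) ℂ)
    (hL : L = !![0, -1, I * k; 1, 0, 0; I * k, 0, 0]) :
    NormedSpace.exp ((τ : ℂ) • L) =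
      !![(Real.cos (ψ * τ) : ℂ), -(1 / (ψ : ℂ)) * Real.sin (ψ * τ),
           (I * k / ψ) * Real.sin (ψ * τ);
         (1 / (ψ : ℂ)) * Real.sin (ψ * τ), ((k : ℂ) ^ 2 + Real.cos (ψ * τ)) / (ψ : ℂ) ^ 2,
           (I * k / (ψ : ℂ) ^ 2) * (1 - Real.cos (ψ * τ));
         (I * k / ψ) * Real.sin (ψ * τ), (I * k / (ψ : ℂ) ^ 2) * (Real.cos (ψ * τ) - 1),
           (1 + (k : ℂ) ^ 2 * Real.cos (ψ * τ)) / (ψ : ℂ) ^ 2] := by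
  have hk : (0:ℝ) < 1 + k ^ 2 := by positivity
  have hψpos : 0 < ψ := hψ ▸ Real.sqrt_pos.2 hk
  have hψ0 : (ψ:ℂ) ≠ 0 := by exact_mod_cast hψpos.ne'
  have hψ2 : (ψ:ℂ) ^ 2 = 1 + (k:ℂ) ^ 2 := by
    have : ψ ^ 2 = 1 + k ^ 2 := by rw [hψ]; exact Real.sq_sqrt hk.le
    exact_mod_cast this
  have hL2 : L * L = !![-(1+(k:ℂ)^2), 0, 0; 0, -1, I*k; 0, -(I*k), -(k:ℂ)^2] := by
    rw [hL, Matrix.mul_fin_three]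
    ext i j
    fin_cases i <;> fin_cases j <;> simp <;>
      first
        | ring1
        | linear_combination ((k:ℂ)^2) * Complex.I_mul_I
        | linear_combination (-((k:ℂ)^2)) * Complex.I_mul_I
        | linear_combination ((k:ℂ)^2) * Complex.I_sq
        | linear_combination (-((k:ℂ)^2)) * Complex.I_sq
  rcases eq_or_ne τ 0 with rfl | hτ
  · letI : NormedRing (Matrix (Fin 3) (Fin 3) ℂ) := Matrix.linftyOpNormedRing
    letI : NormedAlgebra ℂ (Matrix (Fin 3) (Fin 3) ℂ) := Matrix.linftyOpNormedAlgebra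
    rw [Complex.ofReal_zero, zero_smul, NormedSpace.exp_zero, mul_zero, Real.cos_zero,
      Real.sin_zero, Matrix.one_fin_three]
    ext i j
    fin_cases i <;> fin_cases j <;> simp <;> field_simp <;> linear_combination hψ2
  · have hθ : ψ * τ ≠ 0 := mul_ne_zero hψpos.ne' hτ
    have hτ0 : (τ:ℂ) ≠ 0 := by exact_mod_cast hτ
    have hL3 : L ^ 3 = (-(1+(k:ℂ)^2)) • L := by
      rw [pow_succ, pow_two L, hL2, hL, Matrix.mul_fin_three]
      ext i j
      fin_cases i <;> fin_cases j <;>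
        simp [Matrix.smul_apply, vecHead, vecTail] <;>
        first
          | ring1
          | linear_combination ((k:ℂ)^2) * Complex.I_mul_I
          | linear_combination (-((k:ℂ)^2)) * Complex.I_mul_I
          | linear_combination ((k:ℂ)^2) * Complex.I_sq
          | linear_combination (-((k:ℂ)^2)) * Complex.I_sq
    have h3 : ((τ:ℂ) • L) ^ 3 = (-(((ψ * τ : ℝ)):ℂ) ^ 2) • ((τ:ℂ) • L) := by
      rw [smul_pow, hL3, smul_smul, smul_smul]
      congr 1
      push_cast
      linear_combination ((τ:ℂ)^3) * hψ2
    rw [exp_cube (ψ * τ) hθ _ h3, smul_pow, pow_two L, hL2, Matrix.one_fin_three]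
    rw [hL]
    ext i j
    fin_cases i <;> fin_cases j <;>
      simp [Matrix.add_apply, Matrix.smul_apply, smul_eq_mul, Matrix.vecHead,
        Matrix.vecTail] <;>
      push_cast <;>
      field_simp <;>
      first
        | ring1
        | linear_combination ((τ:ℂ)^2 * (1 - Complex.cos ((ψ:ℂ) * (τ:ℂ)))) * hψ2
        | linear_combination ((ψ:ℂ)^2 * (τ:ℂ)^2) * hψ2
        | linear_combination ((ψ:ℂ)^3 * (τ:ℂ)^3) * hψ2
        | linear_combination (-((τ:ℂ)^2 * (1 - Complex.cos ((ψ:ℂ) * (τ:ℂ))))) * hψ2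
        | linear_combination (-((ψ:ℂ)^2 * (τ:ℂ)^2)) * hψ2
        | linear_combination (-((ψ:ℂ)^3 * (τ:ℂ)^3)) * hψ2
        | linear_combination (1 + (ψ:ℂ)^3 * (τ:ℂ)^3) * hψ2
        | linear_combination (1 - Complex.cos ((ψ:ℂ) * (τ:ℂ)) + (ψ:ℂ)^3 * (τ:ℂ)^3) * hψ2
        | linear_combination hψ2
        | linear_combination (1 - Complex.cos ((ψ:ℂ) * (τ:ℂ))) * hψ2
end

section
/- Let ω_R > 0, λ real, ρ > 0 with ρ ≠ 1, and let t be real and x̃, ỹ, z̃ ∈ ℂ be fixed. Define, for r ∈ ℝ, the vector N(r) ∈ ℂ³ with components N₁(r) = (iλ/ω_R) Re(e^{−iω_R(t+r)} x̃) Re(e^{−iρω_R(t+r)} z̃), N₂(r) = (iλ/ω_R) Re(e^{−iω_R(t+r)} ỹ) Re(e^{−iρω_R(t+r)} z̃), and N₃(r) = (iλ/(2ρω_R)) [Re(e^{−iω_R(t+r)} x̃)² + Re(e^{−iω_R(t+r)} ỹ)²]. Then lim_{T → ∞} (1/T) ∫₀^T N(r) dr = (0, 0, (iλ/(4ρω_R))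 (|x̃|² + |ỹ|²)). -/
open Complex Filter

noncomputable def eE (a : ℝ) (r : ℝ) : ℂ := Complex.exp (I * a * r)

lemma eE_cont (a : ℝ) : Continuous (eE a) := by unfold eE; fun_prop

lemma eE_mul (a b r : ℝ) : eE a r * eE b r = eE (a + b) r := by
  unfold eE; rw [← Complex.exp_add]; congr 1; push_cast; ring

lemma conj_eE (a r : ℝ) : (starRingEnd ℂ) (eE a r) = eE (-a) r := by
  unfold eE
  rw [← Complex.exp_conj]
  congr 1
  simp [map_mul, Complex.conj_I]

lemma re_eqC (w : ℂ) : ((w.re : ℝ) : ℂ) = (w + (starRingEnd ℂ) w) / 2 := by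
  rw [Complex.add_conj]; push_cast; ring

lemma re_decomp' (a : ℝ) (t : ℝ) (w : ℂ) (r : ℝ) :
    ((Complex.exp (I * a * ((t + r : ℝ) : ℂ)) * w).re : ℂ)
      = (Complex.exp (I * a * t) * w * eE a r
          + (starRingEnd ℂ) (Complex.exp (I * a * t) * w) * eE (-a) r) / 2 := by
  have h1 : Complex.exp (I * a * ((t + r : ℝ) : ℂ)) = Complex.exp (I * a * t) * eE a r := by
    unfold eE; rw [← Complex.exp_add]; congr 1; push_cast; ring
  rw [h1, re_eqC]
  simp only [map_mul, conj_eE]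
  ring

lemma avg_const (c : ℂ) :
    Tendsto (fun T : ℝ => (T : ℝ)⁻¹ • ∫ r in (0:ℝ)..T, c) atTop (nhds c) := by
  have h : ∀ᶠ T in (atTop : Filter ℝ), c = (T : ℝ)⁻¹ • ∫ r in (0:ℝ)..T, c := by
    filter_upwards [eventually_gt_atTop 0] with T hT
    rw [intervalIntegral.integral_const, smul_smul, sub_zero, inv_mul_cancel₀ hT.ne', one_smul]
  exact tendsto_const_nhds.congr' h

lemma avg_eE_zero {a : ℝ} (ha : a ≠ 0) (c : ℂ) :
    Tendsto (fun T : ℝ => (T : ℝ)⁻¹ • ∫ r in (0:ℝ)..T, c * eE a r) atTop (nhds 0) := by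
  have hIa : (I * (a : ℂ)) ≠ 0 := mul_ne_zero I_ne_zero (Complex.ofReal_ne_zero.mpr ha)
  have key : ∀ T : ℝ, (∫ r in (0:ℝ)..T, c * eE a r)
      = c * ((Complex.exp (I * a * T) - 1) / (I * a)) := by
    intro T
    rw [intervalIntegral.integral_const_mul]
    unfold eE
    rw [integral_exp_mul_complex hIa]
    simp
  simp only [key]
  apply squeeze_zero_norm' (a := fun T : ℝ => T⁻¹ * (‖c‖ * (2 / ‖I * (a:ℂ)‖)))
  · filter_upwards [eventually_ge_atTop 1] with T hT
    have hT0 : (0:ℝ) < T := lt_of_lt_of_le one_pos hT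
    rw [norm_smul, Real.norm_eq_abs, abs_inv, abs_of_pos hT0, norm_mul, norm_div]
    gcongr
    calc ‖Complex.exp (I * a * T) - 1‖ ≤ ‖Complex.exp (I * a * T)‖ + ‖(1:ℂ)‖ := norm_sub_le _ _
      _ = 2 := by
          rw [Complex.norm_exp, norm_one]
          simp
          norm_num
  · simpa using tendsto_inv_atTop_zero.mul_const (‖c‖ * (2 / ‖I * (a:ℂ)‖))

lemma avg_add {f g : ℝ → ℂ} {Lf Lg : ℂ} (hf : Continuous f) (hg : Continuous g)
    (Hf : Tendsto (fun T : ℝ => (T : ℝ)⁻¹ • ∫ r in (0:ℝ)..T, f r) atTop (nhds Lf))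
    (Hg : Tendsto (fun T : ℝ => (T : ℝ)⁻¹ • ∫ r in (0:ℝ)..T, g r) atTop (nhds Lg)) :
    Tendsto (fun T : ℝ => (T : ℝ)⁻¹ • ∫ r in (0:ℝ)..T, f r + g r) atTop (nhds (Lf + Lg)) := by
  have h : ∀ T : ℝ, (∫ r in (0:ℝ)..T, f r + g r)
      = (∫ r in (0:ℝ)..T, f r) + ∫ r in (0:ℝ)..T, g r := fun T =>
    intervalIntegral.integral_add (hf.intervalIntegrable _ _) (hg.intervalIntegrable _ _)
  simpa only [h, smul_add] using Hf.add Hg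

/-- Classical mean correction of the swinging spring: the classical time-average of
the mapped nonlinearity at a fixed modulation-variable state `(x̃, ỹ, z̃)` is
`(0, 0, (iλ/(4ρω_R))(|x̃|² + |ỹ|²))`. -/
theorem swinging_spring_classical_mean_correction
    (ωR lam ρ : ℝ) (hωR : 0 < ωR) (hρ : 0 < ρ) (hρ1 : ρ ≠ 1)
    (t : ℝ) (xt yt zt : ℂ) (N : ℝ → Fin 3 → ℂ)
    (hN : N = fun r : ℝ =>
      ![(I * lam / ωR) * ((Complex.exp (-I * ωR * (t + r)) * xt).re : ℂ) *
          ((Complex.exp (-I * ρ * ωR * (t + r)) * zt).re : ℂ),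
        (I * lam / ωR) * ((Complex.exp (-I * ωR * (t + r)) * yt).re : ℂ) *
          ((Complex.exp (-I * ρ * ωR * (t + r)) * zt).re : ℂ),
        (I * lam / (2 * ρ * ωR)) *
          ((((Complex.exp (-I * ωR * (t + r)) * xt).re : ℂ)) ^ 2 +
            (((Complex.exp (-I * ωR * (t + r)) * yt).re : ℂ)) ^ 2)]) :
    Tendsto (fun T : ℝ => (T : ℝ)⁻¹ • ∫ r in (0:ℝ)..T, N r)
      atTop (nhds ![0, 0,
        (I * lam / (4 * ρ * ωR)) * ((‖xt‖ ^ 2 : ℝ) + (‖yt‖ ^ 2 : ℝ))]) := by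
  subst hN
  -- continuity of the integrand
  have hcont : Continuous (fun r : ℝ =>
      ![(I * lam / ωR) * ((Complex.exp (-I * ωR * (t + r)) * xt).re : ℂ) *
          ((Complex.exp (-I * ρ * ωR * (t + r)) * zt).re : ℂ),
        (I * lam / ωR) * ((Complex.exp (-I * ωR * (t + r)) * yt).re : ℂ) *
          ((Complex.exp (-I * ρ * ωR * (t + r)) * zt).re : ℂ),
        (I * lam / (2 * ρ * ωR)) *
          ((((Complex.exp (-I * ωR * (t + r)) * xt).re : ℂ)) ^ 2 +
            (((Complex.exp (-I * ωR * (t + r)) * yt).re : ℂ)) ^ 2)] : ℝ → Fin 3 → ℂ) := by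
    refine continuous_pi fun i => ?_
    fin_cases i <;>
      simp only [Fin.zero_eta, Fin.mk_one, Fin.reduceFinMk, Matrix.cons_val_zero, Matrix.cons_val_one,
        Matrix.head_cons, Matrix.cons_val_two, Matrix.tail_cons, Fin.isValue] <;> fun_prop
  rw [tendsto_pi_nhds]
  intro i
  have happ : ∀ T : ℝ, ∀ j : Fin 3,
      ((T : ℝ)⁻¹ • ∫ r in (0:ℝ)..T, (fun r : ℝ =>
      ![(I * lam / ωR) * ((Complex.exp (-I * ωR * (t + r)) * xt).re : ℂ) *
          ((Complex.exp (-I * ρ * ωR * (t + r)) * zt).re : ℂ),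
        (I * lam / ωR) * ((Complex.exp (-I * ωR * (t + r)) * yt).re : ℂ) *
          ((Complex.exp (-I * ρ * ωR * (t + r)) * zt).re : ℂ),
        (I * lam / (2 * ρ * ωR)) *
          ((((Complex.exp (-I * ωR * (t + r)) * xt).re : ℂ)) ^ 2 +
            (((Complex.exp (-I * ωR * (t + r)) * yt).re : ℂ)) ^ 2)] : ℝ → Fin 3 → ℂ) r) j
      = (T : ℝ)⁻¹ • ∫ r in (0:ℝ)..T,
          (![(I * lam / ωR) * ((Complex.exp (-I * ωR * (t + r)) * xt).re : ℂ) *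
          ((Complex.exp (-I * ρ * ωR * (t + r)) * zt).re : ℂ),
        (I * lam / ωR) * ((Complex.exp (-I * ωR * (t + r)) * yt).re : ℂ) *
          ((Complex.exp (-I * ρ * ωR * (t + r)) * zt).re : ℂ),
        (I * lam / (2 * ρ * ωR)) *
          ((((Complex.exp (-I * ωR * (t + r)) * xt).re : ℂ)) ^ 2 +
            (((Complex.exp (-I * ωR * (t + r)) * yt).re : ℂ)) ^ 2)] : Fin 3 → ℂ) j := by
    intro T j
    rw [Pi.smul_apply]
    congr 1
    exact (((ContinuousLinearMap.proj j : (Fin 3 → ℂ) →L[ℂ] ℂ)).intervalIntegral_comp_comm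
      (hcont.intervalIntegrable 0 T)).symm
  simp only [happ]
  -- decompositions of the real parts
  set X : ℂ := Complex.exp (-(I * (ωR : ℂ) * (t : ℂ))) * xt with hXdef
  set Y : ℂ := Complex.exp (-(I * (ωR : ℂ) * (t : ℂ))) * yt with hYdef
  set Z : ℂ := Complex.exp (-(I * ((ρ : ℂ) * (ωR : ℂ)) * (t : ℂ))) * zt with hZdef
  have hx : ∀ r : ℝ, ((Complex.exp (-I * ωR * (t + r)) * xt).re : ℂ)
      = (X * eE (-ωR) r + (starRingEnd ℂ) X * eE ωR r) / 2 := by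
    intro r
    have e1 : (-I * (ωR : ℂ) * ((t : ℂ) + (r : ℂ))) = I * ((-ωR : ℝ) : ℂ) * (((t + r : ℝ)) : ℂ) := by
      push_cast; ring
    rw [e1]
    simpa [hXdef, map_mul, neg_neg] using re_decomp' (-ωR) t xt r
  have hy : ∀ r : ℝ, ((Complex.exp (-I * ωR * (t + r)) * yt).re : ℂ)
      = (Y * eE (-ωR) r + (starRingEnd ℂ) Y * eE ωR r) / 2 := by
    intro r
    have e1 : (-I * (ωR : ℂ) * ((t : ℂ) + (r : ℂ))) = I * ((-ωR : ℝ) : ℂ) * (((t + r : ℝ)) : ℂ) := by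
      push_cast; ring
    rw [e1]
    simpa [hYdef, map_mul, neg_neg] using re_decomp' (-ωR) t yt r
  have hz : ∀ r : ℝ, ((Complex.exp (-I * ρ * ωR * (t + r)) * zt).re : ℂ)
      = (Z * eE (-(ρ * ωR)) r + (starRingEnd ℂ) Z * eE (ρ * ωR) r) / 2 := by
    intro r
    have e1 : (-I * (ρ : ℂ) * (ωR : ℂ) * ((t : ℂ) + (r : ℂ)))
        = I * ((-(ρ * ωR) : ℝ) : ℂ) * (((t + r : ℝ)) : ℂ) := by
      push_cast; ring
    rw [e1]
    simpa [hZdef, map_mul, neg_neg] using re_decomp' (-(ρ * ωR)) t zt r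
  -- nonvanishing frequencies
  have hρω : 0 < ρ * ωR := mul_pos hρ hωR
  have h1 : (-ωR + -(ρ * ωR)) ≠ 0 := by nlinarith
  have h2 : (-ωR + ρ * ωR) ≠ 0 := by
    intro h
    have h' : (ρ - 1) * ωR = 0 := by linarith [h]; 
    rcases mul_eq_zero.mp h' with h'' | h''
    · exact hρ1 (by linarith)
    · exact hωR.ne' h''
  have h3 : (ωR + -(ρ * ωR)) ≠ 0 := by
    intro h; exact h2 (by linarith)
  have h4 : (ωR + ρ * ωR) ≠ 0 := by nlinarith
  have h5 : (-ωR + -ωR) ≠ 0 := by nlinarith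
  have h6 : (ωR + ωR) ≠ 0 := by nlinarith
  have hcm : ∀ (c : ℂ) (a : ℝ), Continuous fun r : ℝ => c * eE a r :=
    fun c a => continuous_const.mul (eE_cont a)
  fin_cases i <;>
    simp only [Fin.zero_eta, Fin.mk_one, Fin.reduceFinMk, Matrix.cons_val_zero,
      Matrix.cons_val_one, Matrix.head_cons, Matrix.cons_val_two, Matrix.tail_cons, Fin.isValue]
  · -- first component
    have hkey : ∀ r : ℝ,
        (I * lam / ωR) * ((Complex.exp (-I * ωR * (t + r)) * xt).re : ℂ) *
          ((Complex.exp (-I * ρ * ωR * (t + r)) * zt).re : ℂ)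
        = (I * lam / ωR / 4) * (X * Z) * eE (-ωR + -(ρ * ωR)) r
          + ((I * lam / ωR / 4) * (X * (starRingEnd ℂ) Z) * eE (-ωR + ρ * ωR) r
          + ((I * lam / ωR / 4) * ((starRingEnd ℂ) X * Z) * eE (ωR + -(ρ * ωR)) r
          + (I * lam / ωR / 4) * ((starRingEnd ℂ) X * (starRingEnd ℂ) Z) * eE (ωR + ρ * ωR) r)) := by
      intro r
      rw [hx r, hz r, ← eE_mul, ← eE_mul, ← eE_mul, ← eE_mul]
      ring
    simp only [hkey]
    have Tall := avg_add (hcm _ _) ((hcm _ _).add ((hcm _ _).add (hcm _ _)))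
      (avg_eE_zero h1 ((I * lam / ωR / 4) * (X * Z)))
      (avg_add (hcm _ _) ((hcm _ _).add (hcm _ _))
        (avg_eE_zero h2 ((I * lam / ωR / 4) * (X * (starRingEnd ℂ) Z)))
        (avg_add (hcm _ _) (hcm _ _)
          (avg_eE_zero h3 ((I * lam / ωR / 4) * ((starRingEnd ℂ) X * Z)))
          (avg_eE_zero h4 ((I * lam / ωR / 4) * ((starRingEnd ℂ) X * (starRingEnd ℂ) Z)))))
    simpa using Tall
  · -- second component
    have hkey : ∀ r : ℝ,
        (I * lam / ωR) * ((Complex.exp (-I * ωR * (t + r)) * yt).re : ℂ) *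
          ((Complex.exp (-I * ρ * ωR * (t + r)) * zt).re : ℂ)
        = (I * lam / ωR / 4) * (Y * Z) * eE (-ωR + -(ρ * ωR)) r
          + ((I * lam / ωR / 4) * (Y * (starRingEnd ℂ) Z) * eE (-ωR + ρ * ωR) r
          + ((I * lam / ωR / 4) * ((starRingEnd ℂ) Y * Z) * eE (ωR + -(ρ * ωR)) r
          + (I * lam / ωR / 4) * ((starRingEnd ℂ) Y * (starRingEnd ℂ) Z) * eE (ωR + ρ * ωR) r)) := by
      intro r
      rw [hy r, hz r, ← eE_mul, ← eE_mul, ← eE_mul, ← eE_mul]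
      ring
    simp only [hkey]
    have Tall := avg_add (hcm _ _) ((hcm _ _).add ((hcm _ _).add (hcm _ _)))
      (avg_eE_zero h1 ((I * lam / ωR / 4) * (Y * Z)))
      (avg_add (hcm _ _) ((hcm _ _).add (hcm _ _))
        (avg_eE_zero h2 ((I * lam / ωR / 4) * (Y * (starRingEnd ℂ) Z)))
        (avg_add (hcm _ _) (hcm _ _)
          (avg_eE_zero h3 ((I * lam / ωR / 4) * ((starRingEnd ℂ) Y * Z)))
          (avg_eE_zero h4 ((I * lam / ωR / 4) * ((starRingEnd ℂ) Y * (starRingEnd ℂ) Z)))))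
    simpa using Tall
  · -- third component
    have haX : ‖X‖ = ‖xt‖ := by
      simp [hXdef, map_mul, Complex.norm_exp]
    have haY : ‖Y‖ = ‖yt‖ := by
      simp [hYdef, map_mul, Complex.norm_exp]
    have hXX : X * (starRingEnd ℂ) X = ((‖xt‖ ^ 2 : ℝ) : ℂ) := by
      rw [Complex.mul_conj, Complex.normSq_eq_norm_sq, haX]
    have hYY : Y * (starRingEnd ℂ) Y = ((‖yt‖ ^ 2 : ℝ) : ℂ) := by
      rw [Complex.mul_conj, Complex.normSq_eq_norm_sq, haY]
    have hkey : ∀ r : ℝ,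
        (I * lam / (2 * ρ * ωR)) *
          ((((Complex.exp (-I * ωR * (t + r)) * xt).re : ℂ)) ^ 2 +
            (((Complex.exp (-I * ωR * (t + r)) * yt).re : ℂ)) ^ 2)
        = (I * lam / (2 * ρ * ωR) / 4) * (X ^ 2 + Y ^ 2) * eE (-ωR + -ωR) r
          + ((I * lam / (2 * ρ * ωR) / 4) * ((starRingEnd ℂ) X ^ 2 + (starRingEnd ℂ) Y ^ 2)
              * eE (ωR + ωR) r
          + (I * lam / (4 * ρ * ωR)) *
              (((‖xt‖ ^ 2 : ℝ) : ℂ) + ((‖yt‖ ^ 2 : ℝ) : ℂ))) := by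
      intro r
      rw [hx r, hy r, ← eE_mul, ← eE_mul, ← hXX, ← hYY]
      have h01 : eE (-ωR) r * eE ωR r = 1 := by
        rw [eE_mul]; norm_num [eE]
      linear_combination (I * (lam : ℂ) / (2 * (ρ : ℂ) * (ωR : ℂ))) *
        (X * (starRingEnd ℂ) X + Y * (starRingEnd ℂ) Y) / 2 * h01
    simp only [hkey]
    have Tall := avg_add (hcm _ _) ((hcm _ _).add continuous_const)
      (avg_eE_zero h5 ((I * lam / (2 * ρ * ωR) / 4) * (X ^ 2 + Y ^ 2)))
      (avg_add (hcm _ _) continuous_const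
        (avg_eE_zero h6 ((I * lam / (2 * ρ * ωR) / 4) *
          ((starRingEnd ℂ) X ^ 2 + (starRingEnd ℂ) Y ^ 2)))
        (avg_const ((I * lam / (4 * ρ * ωR)) *
          (((‖xt‖ ^ 2 : ℝ) : ℂ) + ((‖yt‖ ^ 2 : ℝ) : ℂ)))))
    simpa using Tall
end
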